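/- In the MHW swaption setting with γ ∈ [0,1), the function f tends to +∞ as ξ → −∞. -/

import Mathlib

noncomputable def mhwVol (a σ τ : ℝ) : ℝ :=
  if a = 0 then σ * τ else σ * (1 - Real.exp (-(a * τ))) / a

lemma mhwVol_strictMono (a σ : ℝ) (ha : 0 ≤ a) (hσ : 0 < σ) :
    StrictMono (mhwVol a σ) := by
  intro x y hxy
  unfold mhwVol
  rcases eq_or_lt_of_le ha with h | h
  · rw [if_pos h.symm, if_pos h.symm]
    nlinarith
  · rw [if_neg h.ne', if_neg h.ne']
    have h1 : Real.exp (-(a * y)) < Real.exp (-(a * x)) := by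
      apply Real.exp_lt_exp.mpr; nlinarith
    have h2 : σ * (1 - Real.exp (-(a * x))) < σ * (1 - Real.exp (-(a * y))) := by nlinarith
    exact div_lt_div_of_pos_right h2 h

lemma mhwVol_zero (a σ : ℝ) : mhwVol a σ 0 = 0 := by
  unfold mhwVol
  split <;> simp

lemma chain_lt {α ω : ℕ} {t : ℕ → ℝ} (ht : ∀ j ∈ Finset.Ico α ω, t j < t (j+1)) :
    ∀ i j, α ≤ i → i < j → j ≤ ω → t i < t j := by
  intro i j hαi hij hjω
  induction j with
  | zero => omega
  | succ k ih =>
    rcases Nat.lt_or_ge i k with hk | hk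
    · exact (ih (by omega) (by omega)).trans
        (ht k (Finset.mem_Ico.mpr ⟨by omega, by omega⟩))
    · have : i = k := by omega
      subst this
      exact ht i (Finset.mem_Ico.mpr ⟨hαi, by omega⟩)

/-- For `γ ∈ [0,1)`, the swaption payoff function `f` tends to `+∞` as `ξ → −∞`. -/
theorem f_tendsto_atTop_atBot
    (a σ γ ζ : ℝ) (ha : 0 ≤ a) (hσ : 0 < σ) (hγ0 : 0 ≤ γ) (hγ1 : γ < 1) (hζ : 0 < ζ)
    (α ω α' ω' : ℕ) (hω : α + 1 ≤ ω) (hω' : α' + 2 ≤ ω')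
    (t t' : ℕ → ℝ)
    (ht : ∀ j ∈ Finset.Ico α ω, t j < t (j+1))
    (ht' : ∀ ι ∈ Finset.Ico α' ω', t' ι < t' (ι+1))
    (hstart : t' α' = t α) (hend : t' ω' = t ω)
    (c B : ℕ → ℝ) (hc : ∀ j ∈ Finset.Icc (α+1) ω, 0 < c j)
    (hB : ∀ j ∈ Finset.Icc (α+1) ω, 0 < B j)
    (B' β : ℕ → ℝ) (hB' : ∀ ι ∈ Finset.Ico α' ω', 0 < B' ι) (hB'α' : B' α' = 1)
    (hβ : ∀ ι ∈ Finset.Ico α' ω', 1 ≤ β ι)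
    (ς ς' ν : ℕ → ℝ)
    (hς : ∀ j, ς j = (1 - γ) * mhwVol a σ (t j - t α))
    (hς' : ∀ ι, ς' ι = (1 - γ) * mhwVol a σ (t' ι - t α))
    (hν : ∀ ι, ν ι = mhwVol a σ (t' ι - t α) - γ * mhwVol a σ (t' (ι+1) - t α))
    (f : ℝ → ℝ)
    (hf : ∀ ξ : ℝ, f ξ =
        (∑ j ∈ Finset.Icc (α+1) ω, c j * B j * Real.exp (-(ς j) * ξ - (ς j)^2 * ζ^2 / 2))
      + (∑ ι ∈ Finset.Ico (α'+1) ω', B' ι * Real.exp (-(ς' ι) * ξ - (ς' ι)^2 * ζ^2 / 2))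
      - (∑ ι ∈ Finset.Ico α' ω', β ι * B' ι * Real.exp (-(ν ι) * ξ - (ν ι)^2 * ζ^2 / 2)))
    :
    Filter.Tendsto f Filter.atBot Filter.atTop := by
  have hmono := mhwVol_strictMono a σ ha hσ
  set V : ℝ := mhwVol a σ (t ω - t α) with hV
  set s : ℝ := ς ω with hs
  have hsV : s = (1 - γ) * V := hς ω
  -- t α < t ω
  have htαω : t α < t ω := chain_lt ht α ω le_rfl (by omega) le_rfl
  have hVpos : 0 < V := by
    have := hmono (show (0:ℝ) < t ω - t α by linarith)
    rwa [mhwVol_zero] at this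
  have hspos : 0 < s := by
    rw [hsV]; exact mul_pos (by linarith) hVpos
  -- ν ι < s for all ι in range
  have hνs : ∀ ι ∈ Finset.Ico α' ω', ν ι < s := by
    intro ι hι
    rw [Finset.mem_Ico] at hι
    have h1 : t' ι < t' (ι + 1) := ht' ι (Finset.mem_Ico.mpr hι)
    have h2 : t' (ι + 1) ≤ t' ω' := by
      rcases Nat.lt_or_ge (ι + 1) ω' with h | h
      · exact le_of_lt (chain_lt ht' (ι+1) ω' (by omega) h le_rfl)
      · have : ι + 1 = ω' := by omega
        rw [this]
    have hv1 : mhwVol a σ (t' ι - t α) < mhwVol a σ (t' (ι+1) - t α) :=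
      hmono (by linarith)
    have hv2 : mhwVol a σ (t' (ι+1) - t α) ≤ V := by
      rw [hV, ← hend]
      exact hmono.monotone (by linarith)
    rw [hν ι, hsV]
    nlinarith [mul_le_mul_of_nonneg_left (sub_nonneg.mpr hv2) hγ0]
  -- the dominating lower bound
  set A : ℝ := c ω * B ω * Real.exp (-s^2 * ζ^2 / 2) with hA
  have hωmem : ω ∈ Finset.Icc (α+1) ω := Finset.mem_Icc.mpr ⟨hω, le_rfl⟩
  have hApos : 0 < A := by
    have := hc ω hωmem
    have := hB ω hωmem
    positivity
  set g : ℝ → ℝ := fun ξ => Real.exp (-s * ξ) *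
      (A - ∑ ι ∈ Finset.Ico α' ω',
        β ι * B' ι * Real.exp ((s - ν ι) * ξ - (ν ι)^2 * ζ^2 / 2)) with hg
  have hgle : ∀ ξ, g ξ ≤ f ξ := by
    intro ξ
    have hterm : g ξ = c ω * B ω * Real.exp (-(ς ω) * ξ - (ς ω)^2 * ζ^2 / 2)
        - ∑ ι ∈ Finset.Ico α' ω',
            β ι * B' ι * Real.exp (-(ν ι) * ξ - (ν ι)^2 * ζ^2 / 2) := by
      rw [hg]
      simp only [mul_sub, Finset.mul_sum]
      congr 1
      · rw [hA, ← hs, mul_comm, mul_assoc, ← Real.exp_add]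
        ring_nf
      · apply Finset.sum_congr rfl
        intro ι _
        rw [mul_comm (Real.exp (-s * ξ)), mul_assoc, ← Real.exp_add]
        ring_nf
    rw [hterm, hf ξ]
    have hS1 : c ω * B ω * Real.exp (-(ς ω) * ξ - (ς ω)^2 * ζ^2 / 2)
        ≤ ∑ j ∈ Finset.Icc (α+1) ω, c j * B j * Real.exp (-(ς j) * ξ - (ς j)^2 * ζ^2 / 2) := by
      apply Finset.single_le_sum (fun j hj => ?_) hωmem
      have := hc j hj; have := hB j hj; positivity
    have hS2 : (0:ℝ) ≤ ∑ ι ∈ Finset.Ico (α'+1) ω', B' ι * Real.exp (-(ς' ι) * ξ - (ς' ι)^2 * ζ^2 / 2) := by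
      apply Finset.sum_nonneg
      intro ι hι
      have : 0 < B' ι := hB' ι (by rw [Finset.mem_Ico] at hι ⊢; omega)
      positivity
    linarith
  apply Filter.tendsto_atTop_mono hgle
  rw [hg]
  apply Filter.Tendsto.atTop_mul_pos hApos
  · exact Real.tendsto_exp_atTop.comp
      ((Filter.tendsto_const_mul_atTop_of_neg (by linarith : -s < 0)).mpr Filter.tendsto_id)
  · have : Filter.Tendsto (fun ξ => ∑ ι ∈ Finset.Ico α' ω',
        β ι * B' ι * Real.exp ((s - ν ι) * ξ - (ν ι)^2 * ζ^2 / 2)) Filter.atBot (nhds 0) := by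
      have h0 : (0:ℝ) = ∑ ι ∈ Finset.Ico α' ω', (0:ℝ) := by simp
      rw [h0]
      apply tendsto_finset_sum
      intro ι hι
      have hsν : 0 < s - ν ι := sub_pos.mpr (hνs ι hι)
      have hlin : Filter.Tendsto (fun ξ : ℝ => (s - ν ι) * ξ - (ν ι)^2 * ζ^2 / 2)
          Filter.atBot Filter.atBot := by
        apply Filter.tendsto_atBot_add_const_right
        exact (Filter.tendsto_id).const_mul_atBot hsν
      have := Real.tendsto_exp_atBot.comp hlin
      simpa using (this.const_mul (β ι * B' ι))
    have := this.const_sub A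
    simpa using this
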